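/- Let S and U be random variables taking values in finite sets 𝒮 and 𝒰 with joint probability mass function p_{SU}. For any real r ≥ 0, the probability (over U) of the set of values u ∈ 𝒰 for which H_c(S) − H_c(S | U = u) > log₂|𝒰| + 2r + 2 is at most 2^{−r}; equivalently, ℙ_U[ H_c(S) − H_c(S | U) ≤ log₂|𝒰| + 2r + 2 ] ≥ 1 − 2^{−r}. -/

import Mathlib

open Finset Real
open scoped Classical BigOperators

/-- Collision (Rényi order-2) entropy of a distribution `q` on a finite set. -/
noncomputable def collisionEntropy {S : Type*} [Fintype S] (q : S → ℝ) : ℝ :=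
  - Real.logb 2 (∑ s, (q s) ^ 2)

/-- Marginal on the first component of a joint pmf. -/
noncomputable def margS {S U : Type*} [Fintype U] (p : S × U → ℝ) (s : S) : ℝ :=
  ∑ u, p (s, u)

/-- Marginal on the second component of a joint pmf. -/
noncomputable def margU {S U : Type*} [Fintype S] (p : S × U → ℝ) (u : U) : ℝ :=
  ∑ s, p (s, u)

/-- Conditional collision entropy `H_c(S | U = u)` of a joint pmf `p` on `S × U`. -/
noncomputable def condCollisionEntropy {S U : Type*} [Fintype S] [Fintype U]
    (p : S × U → ℝ) (u : U) : ℝ :=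
  - Real.logb 2 (∑ s, (p (s, u) / margU p u) ^ 2)

/-- For jointly distributed random variables `S, U` on finite sets with
joint pmf `p`, and any `r ≥ 0`, the probability (over `U`) of the set of values `u` for which
`H_c(S) − H_c(S | U = u) > log₂|𝒰| + 2r + 2` is at most `2^{−r}`. -/
theorem collision_entropy_leakage_bound
    {S U : Type*} [Fintype S] [Fintype U]
    (p : S × U → ℝ) (hp : ∀ su, 0 ≤ p su) (hsum : ∑ su, p su = 1)
    (r : ℝ) (hr : 0 ≤ r) :
    ∑ u ∈ Finset.univ.filter (fun u : U => 0 < margU p u ∧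
        collisionEntropy (margS p) - condCollisionEntropy p u >
          Real.logb 2 (Fintype.card U) + 2 * r + 2),
      margU p u ≤ (2 : ℝ) ^ (-r) := by
  classical
  set F := Finset.univ.filter (fun u : U => 0 < margU p u ∧
        collisionEntropy (margS p) - condCollisionEntropy p u >
          Real.logb 2 (Fintype.card U) + 2 * r + 2) with hF
  by_cases hFe : F = ∅
  · rw [hFe]
    simp only [Finset.sum_empty]
    positivity
  -- U is nonempty
  have hFne : F.Nonempty := Finset.nonempty_of_ne_empty hFe
  obtain ⟨u₀, hu₀⟩ := hFne
  have hU : (0 : ℝ) < Fintype.card U := by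
    have : Nonempty U := ⟨u₀⟩
    exact_mod_cast Fintype.card_pos
  set n : ℝ := (Fintype.card U : ℝ) with hn
  set Q : ℝ := ∑ s, (margS p s) ^ 2 with hQ
  set C : U → ℝ := fun u => ∑ s, (p (s, u)) ^ 2 with hC
  have hq_nonneg : ∀ s : S, 0 ≤ margS p s := fun s => Finset.sum_nonneg fun u _ => hp _
  have hmargsum : ∑ s, margS p s = 1 := by
    rw [← hsum, Fintype.sum_prod_type]; rfl
  have hQpos : 0 < Q := by
    obtain ⟨s, hs⟩ : ∃ s, 0 < margS p s := by
      by_contra h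
      push_neg at h
      have h2 : ∑ s, margS p s ≤ 0 := Finset.sum_nonpos fun s _ => h s
      rw [hmargsum] at h2
      linarith
    have h3 : (0:ℝ) < (margS p s) ^ 2 := by positivity
    exact lt_of_lt_of_le h3 (Finset.single_le_sum (f := fun s => (margS p s) ^ 2)
      (fun i _ => by positivity) (Finset.mem_univ s))
  have hC_nonneg : ∀ u, 0 ≤ C u := fun u => Finset.sum_nonneg fun s _ => by positivity
  have hCsum : ∑ u, C u ≤ Q := by
    rw [hQ, hC]
    rw [Finset.sum_comm]
    apply Finset.sum_le_sum
    intro s _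
    exact Finset.sum_sq_le_sq_sum_of_nonneg (fun u _ => hp _)
  set T : ℝ := (2:ℝ) ^ (r + 1) with hT
  have hTpos : 0 < T := Real.rpow_pos_of_pos (by norm_num) _
  -- pointwise bound on bad u
  have key : ∀ u ∈ F, margU p u ≤ Real.sqrt (C u) / (Real.sqrt Q * Real.sqrt n * T) := by
    intro u hu
    rw [hF, Finset.mem_filter] at hu
    obtain ⟨-, hPu, hent⟩ := hu
    set P : ℝ := margU p u with hP
    -- C u > 0
    have hCpos : 0 < C u := by
      obtain ⟨s, hs⟩ : ∃ s, 0 < p (s, u) := by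
        by_contra h
        push_neg at h
        have h2 : margU p u ≤ 0 := Finset.sum_nonpos fun s _ => h s
        linarith
      have h3 : (0:ℝ) < (p (s, u)) ^ 2 := by positivity
      exact lt_of_lt_of_le h3 (Finset.single_le_sum (f := fun s => (p (s, u)) ^ 2)
        (fun i _ => by positivity) (Finset.mem_univ s))
    have hA : (∑ s, (p (s, u) / margU p u) ^ 2) = C u / P ^ 2 := by
      rw [hC]
      simp only [div_pow]
      rw [← Finset.sum_div]
    have hApos : 0 < C u / P ^ 2 := by positivity
    -- translate entropy condition
    have hent' : Real.logb 2 (C u / P ^ 2) - Real.logb 2 Q >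
        Real.logb 2 n + (2 * r + 2) := by
      have h0 := hent
      rw [collisionEntropy, condCollisionEntropy, hA] at h0
      linarith
    have hRHS : Real.logb 2 n + (2 * r + 2) = Real.logb 2 (n * (2:ℝ) ^ (2 * r + 2)) := by
      rw [Real.logb_mul (ne_of_gt hU) (ne_of_gt (Real.rpow_pos_of_pos (by norm_num) _)),
        Real.logb_rpow (by norm_num) (by norm_num)]
    have hdiv : Real.logb 2 (C u / P ^ 2) - Real.logb 2 Q = Real.logb 2 (C u / P ^ 2 / Q) := by
      rw [Real.logb_div (ne_of_gt hApos) (ne_of_gt hQpos)]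
    have hlt : n * (2:ℝ) ^ (2 * r + 2) < C u / P ^ 2 / Q := by
      rw [hRHS, hdiv] at hent'
      exact (Real.logb_lt_logb_iff (by norm_num)
        (by positivity) (by positivity)).mp hent'
    -- P^2 < C u / (Q * n * 2^(2r+2))
    have hT2 : (2:ℝ) ^ (2 * r + 2) = T ^ 2 := by
      rw [hT, ← Real.rpow_natCast ((2:ℝ) ^ (r+1)) 2, ← Real.rpow_mul (by norm_num)]
      congr 1
      push_cast
      ring
    have hPsq : P ^ 2 < C u / (Q * n * T ^ 2) := by
      rw [lt_div_iff₀ (by positivity)]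
      have h1 : Q * (n * T ^ 2) * P ^ 2 < C u := by
        calc Q * (n * T ^ 2) * P ^ 2 = Q * P ^ 2 * (n * (2:ℝ) ^ (2 * r + 2)) := by
              rw [hT2]; ring
          _ < Q * P ^ 2 * (C u / P ^ 2 / Q) := by
              apply mul_lt_mul_of_pos_left hlt (by positivity)
          _ = C u := by field_simp
      linarith [h1]
    have hsq : P < Real.sqrt (C u / (Q * n * T ^ 2)) := by
      have := Real.sqrt_lt_sqrt (by positivity : (0:ℝ) ≤ P ^ 2) hPsq
      rwa [Real.sqrt_sq hPu.le] at this
    have hsqrt_eq : Real.sqrt (C u / (Q * n * T ^ 2)) =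
        Real.sqrt (C u) / (Real.sqrt Q * Real.sqrt n * T) := by
      rw [Real.sqrt_div' _ (by positivity), Real.sqrt_mul (by positivity),
        Real.sqrt_mul hQpos.le, Real.sqrt_sq hTpos.le]
    rw [hsqrt_eq] at hsq
    exact hsq.le
  -- sum up
  have hsum_bound : ∑ u ∈ F, margU p u ≤
      (∑ u, Real.sqrt (C u)) / (Real.sqrt Q * Real.sqrt n * T) := by
    calc ∑ u ∈ F, margU p u ≤ ∑ u ∈ F, Real.sqrt (C u) / (Real.sqrt Q * Real.sqrt n * T) :=
          Finset.sum_le_sum key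
      _ ≤ ∑ u, Real.sqrt (C u) / (Real.sqrt Q * Real.sqrt n * T) := by
          apply Finset.sum_le_sum_of_subset_of_nonneg (Finset.subset_univ F)
          intro u _ _
          positivity
      _ = (∑ u, Real.sqrt (C u)) / (Real.sqrt Q * Real.sqrt n * T) := by
          rw [Finset.sum_div]
  -- Cauchy-Schwarz
  have hCS : ∑ u, Real.sqrt (C u) ≤ Real.sqrt n * Real.sqrt Q := by
    have h1 := Finset.sum_mul_sq_le_sq_mul_sq Finset.univ (fun _ : U => (1:ℝ))
      (fun u => Real.sqrt (C u))
    simp only [one_mul, one_pow, Real.sq_sqrt (hC_nonneg _)] at h1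
    have h2 : (∑ u, Real.sqrt (C u)) ^ 2 ≤ n * Q := by
      calc (∑ u, Real.sqrt (C u)) ^ 2 ≤ (∑ _u : U, (1:ℝ)) * ∑ u, C u := h1
        _ = n * ∑ u, C u := by simp [hn, mul_comm]
        _ ≤ n * Q := by
            apply mul_le_mul_of_nonneg_left hCsum hU.le
    have h3 : ∑ u, Real.sqrt (C u) ≤ Real.sqrt (n * Q) := by
      have := Real.sqrt_le_sqrt h2
      rwa [Real.sqrt_sq (Finset.sum_nonneg fun u _ => Real.sqrt_nonneg _)] at this
    rwa [Real.sqrt_mul hU.le] at h3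
  have hfinal : (∑ u, Real.sqrt (C u)) / (Real.sqrt Q * Real.sqrt n * T) ≤
      (2:ℝ) ^ (-(r + 1)) := by
    rw [div_le_iff₀ (by positivity)]
    calc ∑ u, Real.sqrt (C u) ≤ Real.sqrt n * Real.sqrt Q := hCS
      _ = (2:ℝ) ^ (-(r + 1)) * (Real.sqrt Q * Real.sqrt n * T) := by
          have h21 : (2:ℝ) ^ (-(r+1)) * (2:ℝ) ^ (r+1) = 1 := by
            rw [← Real.rpow_add (by norm_num : (0:ℝ) < 2),
              show -(r+1) + (r+1) = 0 from by ring, Real.rpow_zero]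
          rw [hT, show (2:ℝ) ^ (-(r+1)) * (Real.sqrt Q * Real.sqrt n * (2:ℝ) ^ (r+1)) =
            (Real.sqrt n * Real.sqrt Q) * ((2:ℝ) ^ (-(r+1)) * (2:ℝ) ^ (r+1)) from by ring,
            h21, mul_one]
  calc ∑ u ∈ F, margU p u ≤ (∑ u, Real.sqrt (C u)) / (Real.sqrt Q * Real.sqrt n * T) := hsum_bound
    _ ≤ (2:ℝ) ^ (-(r + 1)) := hfinal
    _ ≤ (2:ℝ) ^ (-r) := Real.rpow_le_rpow_of_exponent_le (by norm_num) (by linarith)
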